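/- arXiv:1307.6678 — 6 statements merged into one kernel-verified Lean document; each statement's English description precedes it below -/
import Mathlib

section
/- For all m ≥ 1, the identity m·h_m = Σ_{k=1}^{m} p_k·h_{m-k} holds, where p_k is the k-th power sum and h_k the k-th complete homogeneous symmetric polynomial in n variables. -/
open MvPolynomial

private lemma multiset_prod_X_eq_monomial (n : ℕ) (s : Multiset (Fin n)) :
    (s.map (X : Fin n → MvPolynomial (Fin n) ℚ)).prod = monomial s.toFinsupp 1 := by
  induction s using Multiset.induction with
  | empty => simp
  | cons a s ih =>
      rw [Multiset.map_cons, Multiset.prod_cons, ih, ← Multiset.singleton_add,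
        Multiset.toFinsupp_add, Multiset.toFinsupp_singleton, monomial_single_add, pow_one]

private lemma coeff_hsymm (n m : ℕ) (d : Fin n →₀ ℕ) :
    coeff d (hsymm (Fin n) ℚ m) = if (∑ j, d j) = m then 1 else 0 := by
  have hsum : ∀ e : Fin n →₀ ℕ, (e.sum fun _ => id) = ∑ j, e j :=
    fun e => Finsupp.sum_fintype _ _ (fun _ => rfl)
  rw [hsymm]
  simp_rw [multiset_prod_X_eq_monomial, coeff_sum, coeff_monomial]
  by_cases h : (∑ j, d j) = m
  · rw [if_pos h]
    have hcard : Multiset.card (Finsupp.toMultiset d) = m := by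
      rw [Finsupp.card_toMultiset, hsum d, h]
    set s₀ : Sym (Fin n) m := ⟨Finsupp.toMultiset d, hcard⟩ with hs₀
    have key : ∀ s : Sym (Fin n) m, (Multiset.toFinsupp s.1 = d) ↔ s = s₀ := by
      intro s
      constructor
      · intro hs
        apply Subtype.ext
        show (s : Multiset (Fin n)) = Finsupp.toMultiset d
        rw [← hs, Multiset.toFinsupp_toMultiset]
        rfl
      · intro hs
        rw [hs, hs₀, Finsupp.toMultiset_toFinsupp]
    simp_rw [key]
    simp
  · rw [if_neg h]
    apply Finset.sum_eq_zero
    intro s _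
    rw [if_neg]
    intro hs
    apply h
    rw [← hs, ← hsum, Multiset.toFinsupp_sum_eq, s.2]

/-- For `m ≥ 1`, `m * h_m = ∑_{k=1}^{m} p_k * h_{m-k}`. -/
theorem mul_hsymm_eq_sum_psum_hsymm (n m : ℕ) (hm : 1 ≤ m) :
    (m : MvPolynomial (Fin n) ℚ) * hsymm (Fin n) ℚ m =
      ∑ k ∈ Finset.Icc 1 m, psum (Fin n) ℚ k * hsymm (Fin n) ℚ (m - k) := by
  ext d
  have hLHS : coeff d ((m : MvPolynomial (Fin n) ℚ) * hsymm (Fin n) ℚ m)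
      = (m : ℚ) * coeff d (hsymm (Fin n) ℚ m) := by
    rw [← map_natCast (C : ℚ →+* MvPolynomial (Fin n) ℚ) m, coeff_C_mul]
  -- expand RHS coefficient
  have hterm : ∀ k ∈ Finset.Icc 1 m, coeff d (psum (Fin n) ℚ k * hsymm (Fin n) ℚ (m - k))
      = ∑ i, (if k ≤ d i then coeff (d - Finsupp.single i k) (hsymm (Fin n) ℚ (m - k)) else 0) := by
    intro k hk
    rw [psum, Finset.sum_mul, coeff_sum]
    refine Finset.sum_congr rfl fun i _ => ?_
    simp only [X_pow_eq_monomial, coeff_monomial_mul', Finsupp.single_le_iff, one_mul]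
  rw [hLHS, coeff_sum, Finset.sum_congr rfl hterm]
  -- sum of subtracted finsupp
  have hsub : ∀ (i : Fin n) (k : ℕ), k ≤ d i →
      (∑ j, (d - Finsupp.single i k) j) = (∑ j, d j) - k := by
    intro i k hk
    have h1 : ∀ j, (d - Finsupp.single i k) j = d j - Finsupp.single i k j := fun j => rfl
    have h2 : ∀ j, (d - Finsupp.single i k) j + Finsupp.single i k j = d j := by
      intro j
      rw [h1]
      rcases eq_or_ne j i with rfl | hji
      · simp only [Finsupp.single_eq_same]
        omega
      · simp [Finsupp.single_apply, hji.symm]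
    have h3 : (∑ j, Finsupp.single i k j) = k := by
      simp [Finsupp.single_apply]
    have h4 : (∑ j, (d - Finsupp.single i k) j) + (∑ j, Finsupp.single i k j) = ∑ j, d j := by
      rw [← Finset.sum_add_distrib]
      exact Finset.sum_congr rfl fun j _ => h2 j
    rw [h3] at h4
    omega
  by_cases hd : (∑ j, d j) = m
  · -- coefficient is m on both sides
    rw [coeff_hsymm, if_pos hd, mul_one]
    have hdi : ∀ i : Fin n, d i ≤ m := by
      intro i
      rw [← hd]
      exact Finset.single_le_sum (f := fun j => d j) (fun _ _ => Nat.zero_le _) (Finset.mem_univ i)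
    have : ∀ k ∈ Finset.Icc 1 m, ∀ i : Fin n,
        (if k ≤ d i then coeff (d - Finsupp.single i k) (hsymm (Fin n) ℚ (m - k)) else 0)
        = if k ≤ d i then 1 else 0 := by
      intro k hk i
      rcases le_or_gt k (d i) with h | h
      · rw [if_pos h, if_pos h, coeff_hsymm, if_pos]
        rw [hsub i k h, hd]
      · rw [if_neg (not_le.mpr h), if_neg (not_le.mpr h)]
    rw [Finset.sum_congr rfl fun k hk => Finset.sum_congr rfl fun i _ => this k hk i]
    rw [Finset.sum_comm]
    have : ∀ i : Fin n, (∑ k ∈ Finset.Icc 1 m, if k ≤ d i then (1 : ℚ) else 0) = (d i : ℚ) := by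
      intro i
      rw [← Finset.sum_filter]
      have : Finset.filter (fun k => k ≤ d i) (Finset.Icc 1 m) = Finset.Icc 1 (d i) := by
        ext k
        simp only [Finset.mem_filter, Finset.mem_Icc]
        constructor
        · rintro ⟨⟨h1, _⟩, h2⟩; exact ⟨h1, h2⟩
        · rintro ⟨h1, h2⟩; exact ⟨⟨h1, h2.trans (hdi i)⟩, h2⟩
      rw [this]
      simp [Nat.card_Icc]
    simp_rw [this]
    rw [← Nat.cast_sum, hd]
  · -- coefficient is 0 on both sides
    rw [coeff_hsymm, if_neg hd, mul_zero]
    symm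
    apply Finset.sum_eq_zero
    intro k hk
    apply Finset.sum_eq_zero
    intro i _
    rcases le_or_gt k (d i) with h | h
    · rw [if_pos h, coeff_hsymm, if_neg]
      rw [hsub i k h]
      intro hcontra
      apply hd
      have hkd : k ≤ ∑ j, d j := h.trans (Finset.single_le_sum
        (f := fun j => d j) (fun _ _ => Nat.zero_le _) (Finset.mem_univ i))
      have hkm : k ≤ m := (Finset.mem_Icc.mp hk).2
      omega
    · rw [if_neg (not_le.mpr h)]
end

section
/- For every n×n matrix A over an algebraically closed field k and every integer m ≥ 0, the matrix whose (i,j)-entry is (∂_{ji} s_{m+1})(A), multiplied by (-1)^m, equals A^m + Σ_{k=1}^{m} (-1)^k·s_k(A)·A^{m-k}, where s_k(A) = tr(Λ^k A) are the coefficients (up to sign) of the characteristic polynomial and ∂_{ji} denotes partial differentiation of a polynomial function on gl_n with respect to the matrix entry x_{ji}. -/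
open MvPolynomial

/-- The generic `n × n` matrix whose `(i,j)` entry is the coordinate function `x_{ij}`. -/
noncomputable def genMat (k : Type*) [CommRing k] (n : ℕ) :
    Matrix (Fin n) (Fin n) (MvPolynomial (Fin n × Fin n) k) :=
  Matrix.of fun i j => X (i, j)

/-- `s_m = tr(Λ^m) `, the `m`-th elementary symmetric function of the eigenvalues, regarded
as a polynomial in the matrix entries: up to the sign `(-1)^m` it is the coefficient of
`X^(n-m)` in the characteristic polynomial of the generic matrix (and `s_m = 0` for `m > n`). -/
noncomputable def sPoly (k : Type*) [CommRing k] (n : ℕ) (m : ℕ) :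
    MvPolynomial (Fin n × Fin n) k :=
  if m ≤ n then (-1) ^ m * (genMat k n).charpoly.coeff (n - m) else 0

section AuxJacobi

open Polynomial Matrix

variable {R A : Type*} [CommRing R] [CommRing A] [Algebra R A]

lemma Derivation.map_finset_prod (D : Derivation R A A) {ι : Type*} [DecidableEq ι]
    (s : Finset ι) (f : ι → A) :
    D (∏ i ∈ s, f i) = ∑ i ∈ s, D (f i) * ∏ j ∈ s.erase i, f j := by
  induction s using Finset.induction_on with
  | empty => simp
  | insert a s ha ih =>
    rw [Finset.prod_insert ha, D.leibniz, Finset.sum_insert ha, Finset.erase_insert ha]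
    simp only [smul_eq_mul, ih, Finset.mul_sum]
    rw [add_comm]
    congr 1
    · ring
    · apply Finset.sum_congr rfl
      intro b hb
      rw [Finset.erase_insert_of_ne (by rintro rfl; exact ha hb),
        Finset.prod_insert (by simp [ha])]
      ring

lemma Derivation.map_det {n : Type*} [Fintype n] [DecidableEq n]
    (D : Derivation R A A) (M : Matrix n n A) :
    D M.det = ∑ a : n, ∑ b : n, M.adjugate a b * D (M b a) := by
  have hsgn : ∀ (σ : Equiv.Perm n) (x : A), D ((Equiv.Perm.sign σ : ℤ) * x) =
      (Equiv.Perm.sign σ : ℤ) * D x := by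
    intro σ x
    rcases Int.units_eq_one_or (Equiv.Perm.sign σ) with h | h <;>
      simp [h, ← neg_mul, map_neg]
  have step1 : D M.det = ∑ a : n, (M.updateCol a fun i => D (M i a)).det := by
    rw [det_apply', map_sum]
    simp only [hsgn, D.map_finset_prod, Finset.mul_sum]
    rw [Finset.sum_comm]
    apply Finset.sum_congr rfl
    intro a _
    rw [det_apply']
    apply Finset.sum_congr rfl
    intro σ _
    congr 1
    rw [← Finset.mul_prod_erase Finset.univ _ (Finset.mem_univ a)]
    rw [updateCol_self]
    congr 1
    apply Finset.prod_congr rfl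
    intro i hi
    rw [updateCol_ne (Finset.ne_of_mem_erase hi)]
  rw [step1]
  apply Finset.sum_congr rfl
  intro a _
  rw [← cramer_apply, cramer_eq_adjugate_mulVec]
  rfl

/-- The coefficient-wise extension of a derivation to polynomials. -/
noncomputable def derHat (d : Derivation R A A) : Derivation R A[X] A[X] :=
  (PolynomialModule.equivPolynomialSelf.toLinearMap).compDer d.mapCoeffs

lemma derHat_coeff (d : Derivation R A A) (p : A[X]) (r : ℕ) :
    (derHat d p).coeff r = d (p.coeff r) := rfl

lemma derHat_X (d : Derivation R A A) : derHat d (Polynomial.X : A[X]) = 0 := by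
  ext r
  rw [derHat_coeff, Polynomial.coeff_X, Polynomial.coeff_zero, apply_ite d]
  simp [d.map_one_eq_zero]

lemma derHat_C (d : Derivation R A A) (a : A) :
    derHat d (Polynomial.C a : A[X]) = Polynomial.C (d a) := by
  ext r
  rw [derHat_coeff, Polynomial.coeff_C, Polynomial.coeff_C, apply_ite d, map_zero]

end AuxJacobi

section AuxGeneric

open Polynomial Matrix

set_option maxHeartbeats 1000000 in
lemma pderiv_charpoly_coeff {k : Type*} [CommRing k] (n : ℕ) (v : Fin n × Fin n) (r : ℕ) :
    MvPolynomial.pderiv v ((genMat k n).charpoly.coeff r) =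
      - ((adjugate (charmatrix (genMat k n)) v.2 v.1).coeff r) := by
  have h1 : MvPolynomial.pderiv v ((genMat k n).charpoly.coeff r) =
      (derHat (MvPolynomial.pderiv v) (genMat k n).charpoly).coeff r := rfl
  set M : Matrix (Fin n) (Fin n) (MvPolynomial (Fin n × Fin n) k)[X] :=
    charmatrix (genMat k n) with hM
  have h2 : ∀ a b : Fin n, derHat (MvPolynomial.pderiv v) (M b a) =
      - Polynomial.C (if (b, a) = v then 1 else 0) := by
    intro a b
    rw [hM, charmatrix_apply, map_sub, derHat_C]
    have hdiag : derHat (MvPolynomial.pderiv v) (Matrix.diagonal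
        (fun _ : Fin n => (Polynomial.X : (MvPolynomial (Fin n × Fin n) k)[X])) b a) = 0 := by
      by_cases h : b = a
      · subst h; rw [Matrix.diagonal_apply_eq, derHat_X]
      · rw [Matrix.diagonal_apply_ne _ h, map_zero]
    rw [hdiag, zero_sub]
    have hx : (MvPolynomial.pderiv v) (genMat k n b a) =
        (if (b, a) = v then 1 else 0 : MvPolynomial (Fin n × Fin n) k) := by
      classical
      rw [show genMat k n b a = MvPolynomial.X (b, a) from rfl, pderiv_X, Pi.single_apply]
    rw [hx]
  have key : ∑ a : Fin n, ∑ b : Fin n,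
      M.adjugate a b * derHat (MvPolynomial.pderiv v) (M b a) = - M.adjugate v.2 v.1 := by
    have h3 : ∀ a b : Fin n, (M.adjugate a b * derHat (MvPolynomial.pderiv v) (M b a))
        = -(if (b, a) = v then M.adjugate a b else 0) := by
      intro a b
      rw [h2]
      split
      · rw [Polynomial.C_1]; ring
      · rw [Polynomial.C_0]; ring
    rw [Finset.sum_congr rfl fun a _ => Finset.sum_congr rfl fun b _ => h3 a b]
    simp only [Finset.sum_neg_distrib]
    congr 1
    rw [Finset.sum_comm, Finset.sum_eq_single v.1]
    · rw [Finset.sum_eq_single v.2]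
      · simp
      · intro a _ ha; simp [Prod.ext_iff, ha]
      · simp
    · intro b _ hb
      apply Finset.sum_eq_zero
      intro a _
      simp [Prod.ext_iff, hb]
    · simp
  rw [h1, Matrix.charpoly, ← hM, Derivation.map_det, key, Polynomial.coeff_neg]

end AuxGeneric

section AuxField

open Polynomial Matrix

variable {k : Type*} [Field k] {n : ℕ}

noncomputable def geom (A : Matrix (Fin n) (Fin n) k) (t : ℕ) : (Matrix (Fin n) (Fin n) k)[X] :=
  ∑ l ∈ Finset.range t, Polynomial.C (A ^ (t - 1 - l)) * Polynomial.X ^ l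

lemma geom_succ (A : Matrix (Fin n) (Fin n) k) (t : ℕ) :
    geom A (t + 1) = Polynomial.C (A ^ t) + Polynomial.X * geom A t := by
  rw [geom, geom, Finset.sum_range_succ', Finset.mul_sum, add_comm]
  refine congrArg₂ (· + ·) ?_ ?_
  · simp
  · apply Finset.sum_congr rfl
    intro l hl
    have h : t + 1 - 1 - (l + 1) = t - 1 - l := by omega
    rw [h, pow_succ', ← mul_assoc, ← Polynomial.X_mul, mul_assoc]

lemma X_sub_C_mul_geom (A : Matrix (Fin n) (Fin n) k) (t : ℕ) :
    (Polynomial.X - Polynomial.C A) * geom A t =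
      Polynomial.X ^ t - Polynomial.C (A ^ t) := by
  induction t with
  | zero => simp [geom]
  | succ t ih =>
    rw [geom_succ, mul_add, ← mul_assoc, ← Polynomial.X_mul, mul_assoc, ih]
    rw [sub_mul, Polynomial.X_mul_C, ← Polynomial.X_mul, ← Polynomial.C_mul]
    rw [mul_sub, ← pow_succ', ← pow_succ']
    abel

lemma geom_coeff (A : Matrix (Fin n) (Fin n) k) (t r : ℕ) :
    (geom A t).coeff r = if r < t then A ^ (t - 1 - r) else 0 := by
  rw [geom, Polynomial.finset_sum_coeff]
  have h : ∀ l ∈ Finset.range t, (Polynomial.C (A ^ (t - 1 - l)) * Polynomial.X ^ l).coeff r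
      = if l = r then A ^ (t - 1 - l) else 0 := by
    intro l _
    rw [Polynomial.coeff_C_mul, Polynomial.coeff_X_pow]
    rcases eq_or_ne l r with h | h
    · subst h; rw [if_pos rfl, if_pos rfl, mul_one]
    · rw [if_neg (Ne.symm h), if_neg h, mul_zero]
  rw [Finset.sum_congr rfl h, Finset.sum_ite_eq' (Finset.range t) r]
  simp [Finset.mem_range]

lemma matPolyEquiv_adjugate_charmatrix (A : Matrix (Fin n) (Fin n) k) :
    matPolyEquiv (adjugate (charmatrix A)) =
      ∑ t ∈ Finset.range (n + 1),
        Polynomial.C ((Matrix.charpoly A).coeff t • (1 : Matrix (Fin n) (Fin n) k)) * geom A t := by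
  have hdeg : (Matrix.charpoly A).natDegree = n := by
    rw [Matrix.charpoly_natDegree_eq_dim, Fintype.card_fin]
  apply (Polynomial.monic_X_sub_C A).isRegular.left
  show (Polynomial.X - Polynomial.C A) * _ = (Polynomial.X - Polynomial.C A) * _
  have lhs_eq : (Polynomial.X - Polynomial.C A) * matPolyEquiv (adjugate (charmatrix A)) =
      (Matrix.charpoly A).map (algebraMap k (Matrix (Fin n) (Fin n) k)) := by
    rw [← Matrix.matPolyEquiv_charmatrix, ← _root_.map_mul, Matrix.mul_adjugate,
      ← Matrix.charpoly, matPolyEquiv_smul_one]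
  rw [lhs_eq, Finset.mul_sum]
  have hc : ∀ t, (Polynomial.X - Polynomial.C A) *
      (Polynomial.C ((Matrix.charpoly A).coeff t • (1 : Matrix (Fin n) (Fin n) k)) * geom A t) =
      Polynomial.C ((Matrix.charpoly A).coeff t • (1 : Matrix (Fin n) (Fin n) k)) *
        ((Polynomial.X - Polynomial.C A) * geom A t) := by
    intro t
    have hcomm : Polynomial.C ((Matrix.charpoly A).coeff t • (1 : Matrix (Fin n) (Fin n) k)) *
        (Polynomial.X - Polynomial.C A) =
        (Polynomial.X - Polynomial.C A) *
          Polynomial.C ((Matrix.charpoly A).coeff t • (1 : Matrix (Fin n) (Fin n) k)) := by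
      rw [mul_sub, sub_mul, ← Polynomial.X_mul, ← Polynomial.C_mul, ← Polynomial.C_mul,
        smul_one_mul, mul_smul_one]
    rw [← mul_assoc, ← hcomm, mul_assoc]
  rw [Finset.sum_congr rfl fun t _ => hc t]
  have claim1 : ∑ t ∈ Finset.range (n + 1),
      Polynomial.C ((Matrix.charpoly A).coeff t • (1 : Matrix (Fin n) (Fin n) k)) *
        Polynomial.X ^ t =
      (Matrix.charpoly A).map (algebraMap k (Matrix (Fin n) (Fin n) k)) := by
    ext r
    rw [Polynomial.finset_sum_coeff, Polynomial.coeff_map]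
    have h : ∀ t ∈ Finset.range (n + 1),
        (Polynomial.C ((Matrix.charpoly A).coeff t • (1 : Matrix (Fin n) (Fin n) k)) *
          Polynomial.X ^ t).coeff r =
        if t = r then (Matrix.charpoly A).coeff t • (1 : Matrix (Fin n) (Fin n) k) else 0 := by
      intro t _
      rw [Polynomial.coeff_C_mul, Polynomial.coeff_X_pow]
      rcases eq_or_ne t r with h | h
      · subst h; rw [if_pos rfl, if_pos rfl, mul_one]
      · rw [if_neg (Ne.symm h), if_neg h, mul_zero]
    rw [Finset.sum_congr rfl h, Finset.sum_ite_eq' (Finset.range (n + 1)) r]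
    by_cases hr : r ∈ Finset.range (n + 1)
    · rw [if_pos hr, Algebra.algebraMap_eq_smul_one]
    · rw [if_neg hr, Polynomial.coeff_eq_zero_of_natDegree_lt, map_zero]
      rw [hdeg]
      simpa using Finset.mem_range.not.mp hr
  have claim2 : ∑ t ∈ Finset.range (n + 1),
      Polynomial.C ((Matrix.charpoly A).coeff t • (1 : Matrix (Fin n) (Fin n) k)) *
        Polynomial.C (A ^ t) = 0 := by
    have h : ∀ t, Polynomial.C ((Matrix.charpoly A).coeff t • (1 : Matrix (Fin n) (Fin n) k)) *
        Polynomial.C (A ^ t) =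
        Polynomial.C ((Matrix.charpoly A).coeff t • A ^ t) := by
      intro t
      rw [← Polynomial.C_mul, smul_one_mul]
    rw [Finset.sum_congr rfl fun t _ => h t, ← map_sum]
    have h2 : ∑ t ∈ Finset.range (n + 1), (Matrix.charpoly A).coeff t • A ^ t =
        Polynomial.aeval A (Matrix.charpoly A) := by
      rw [Polynomial.aeval_eq_sum_range' (by omega : (Matrix.charpoly A).natDegree < n + 1)]
    rw [h2, Matrix.aeval_self_charpoly, map_zero]
  simp only [X_sub_C_mul_geom, mul_sub, Finset.sum_sub_distrib]
  rw [claim1, claim2, sub_zero]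

lemma coeff_matPolyEquiv_adjugate (A : Matrix (Fin n) (Fin n) k) (r : ℕ) :
    (matPolyEquiv (adjugate (charmatrix A))).coeff r =
      ∑ t ∈ Finset.Icc (r + 1) n, (Matrix.charpoly A).coeff t • A ^ (t - 1 - r) := by
  rw [matPolyEquiv_adjugate_charmatrix, Polynomial.finset_sum_coeff]
  have h : ∀ t ∈ Finset.range (n + 1),
      (Polynomial.C ((Matrix.charpoly A).coeff t • (1 : Matrix (Fin n) (Fin n) k)) *
        geom A t).coeff r =
      if r < t then (Matrix.charpoly A).coeff t • A ^ (t - 1 - r) else 0 := by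
    intro t _
    rw [Polynomial.coeff_C_mul, geom_coeff]
    split_ifs
    · rw [smul_one_mul]
    · rw [mul_zero]
  rw [Finset.sum_congr rfl h, ← Finset.sum_filter]
  congr 1
  ext t
  simp only [Finset.mem_filter, Finset.mem_range, Finset.mem_Icc]
  omega

end AuxField

/-- `(-1)^m (∂_{ji} s_{m+1})(A)_{ij} = A^m + ∑_{k=1}^m (-1)^k s_k(A) A^{m-k}`. -/
theorem pderiv_sPoly_matrix {k : Type*} [Field k] [IsAlgClosed k] (n m : ℕ)
    (A : Matrix (Fin n) (Fin n) k) :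
    ((-1 : k) ^ m) • (Matrix.of fun i j =>
        eval (fun p : Fin n × Fin n => A p.1 p.2) (pderiv (j, i) (sPoly k n (m + 1)))) =
      A ^ m + ∑ j ∈ Finset.Icc 1 m,
        ((-1 : k) ^ j * eval (fun p : Fin n × Fin n => A p.1 p.2) (sPoly k n j)) •
          A ^ (m - j) := by
  classical
  have hgen : (genMat k n).map (MvPolynomial.eval fun p : Fin n × Fin n => A p.1 p.2) = A := by
    ext i j
    simp [genMat]
  have hdeg : (Matrix.charpoly A).natDegree = n := by
    rw [Matrix.charpoly_natDegree_eq_dim, Fintype.card_fin]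
  have E1 : ∀ r : ℕ, MvPolynomial.eval (fun p : Fin n × Fin n => A p.1 p.2)
      ((genMat k n).charpoly.coeff r) = (Matrix.charpoly A).coeff r := by
    intro r
    conv_rhs => rw [← hgen]
    rw [Matrix.charpoly_map, Polynomial.coeff_map]
  have E2 : ∀ (r : ℕ) (i j : Fin n), MvPolynomial.eval (fun p : Fin n × Fin n => A p.1 p.2)
      ((Matrix.adjugate (Matrix.charmatrix (genMat k n)) i j).coeff r) =
      ((Matrix.adjugate (Matrix.charmatrix A)) i j).coeff r := by
    intro r i j
    have h3 := Matrix.charmatrix_map (genMat k n)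
      (MvPolynomial.eval fun p : Fin n × Fin n => A p.1 p.2)
    rw [hgen] at h3
    have h4 : Matrix.adjugate (Matrix.charmatrix A) =
        (Matrix.adjugate (Matrix.charmatrix (genMat k n))).map
          (Polynomial.map (MvPolynomial.eval fun p : Fin n × Fin n => A p.1 p.2)) := by
      rw [h3]
      have h5 := (Polynomial.mapRingHom
        (MvPolynomial.eval fun p : Fin n × Fin n => A p.1 p.2)).map_adjugate
          (Matrix.charmatrix (genMat k n))
      simp only [RingHom.mapMatrix_apply, Polynomial.coe_mapRingHom] at h5
      exact h5.symm
    rw [h4, Matrix.map_apply, Polynomial.coeff_map]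
  by_cases hmn : m + 1 ≤ n
  · -- main case
    have key : ((-1 : k) ^ m) • (Matrix.of fun i j =>
        eval (fun p : Fin n × Fin n => A p.1 p.2) (pderiv (j, i) (sPoly k n (m + 1)))) =
        (matPolyEquiv (Matrix.adjugate (Matrix.charmatrix A))).coeff (n - (m + 1)) := by
      ext i j
      rw [Matrix.smul_apply, Matrix.of_apply, matPolyEquiv_coeff_apply]
      rw [sPoly, if_pos hmn]
      have hC : ((-1 : MvPolynomial (Fin n × Fin n) k)) ^ (m + 1) =
          MvPolynomial.C ((-1 : k) ^ (m + 1)) := by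
        rw [map_pow, map_neg, map_one]
      rw [hC, pderiv_C_mul, map_mul, MvPolynomial.eval_C,
        pderiv_charpoly_coeff n (j, i) (n - (m + 1)), map_neg, E2]
      generalize ((Matrix.adjugate (Matrix.charmatrix A) i j).coeff (n - (m + 1))) = y
      have h1 : ((-1 : k)) ^ m * ((-1 : k)) ^ m = 1 := by
        rw [← mul_pow]; norm_num
      rw [smul_eq_mul]
      linear_combination y * h1
    rw [show ((-1 : k) ^ m) • (Matrix.of fun i j =>
        eval (fun p : Fin n × Fin n => A p.1 p.2) (pderiv (j, i) (sPoly k n (m + 1)))) =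
        (matPolyEquiv (Matrix.adjugate (Matrix.charmatrix A))).coeff (n - (m + 1)) from key,
      coeff_matPolyEquiv_adjugate]
    have hsp : ∀ jj ∈ Finset.Icc 1 m,
        ((-1 : k) ^ jj * eval (fun p : Fin n × Fin n => A p.1 p.2) (sPoly k n jj)) •
          A ^ (m - jj) = (Matrix.charpoly A).coeff (n - jj) • A ^ (m - jj) := by
      intro jj hjj
      simp only [Finset.mem_Icc] at hjj
      rw [sPoly, if_pos (by omega : jj ≤ n)]
      have hC : ((-1 : MvPolynomial (Fin n × Fin n) k)) ^ jj =
          MvPolynomial.C ((-1 : k) ^ jj) := by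
        rw [map_pow, map_neg, map_one]
      rw [hC, map_mul, MvPolynomial.eval_C, E1]
      congr 1
      have h1 : ((-1 : k)) ^ jj * ((-1 : k)) ^ jj = 1 := by
        rw [← mul_pow]; norm_num
      rw [← mul_assoc, h1, one_mul]
    rw [Finset.sum_congr rfl hsp]
    have hcn : (Matrix.charpoly A).coeff n = 1 := by
      have h := (Matrix.charpoly_monic A).coeff_natDegree
      rw [hdeg] at h
      exact h
    have h0 : A ^ m = (Matrix.charpoly A).coeff (n - 0) • A ^ (m - 0) := by
      rw [Nat.sub_zero, Nat.sub_zero, hcn, one_smul]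
    rw [h0, ← Finset.sum_insert
      (f := fun x => (Matrix.charpoly A).coeff (n - x) • A ^ (m - x))
      (by simp : (0 : ℕ) ∉ Finset.Icc 1 m)]
    have hins : insert (0 : ℕ) (Finset.Icc 1 m) = Finset.Icc 0 m := by
      ext x
      simp only [Finset.mem_insert, Finset.mem_Icc]
      omega
    rw [hins]
    apply Finset.sum_nbij' (i := fun t => n - t) (j := fun jj => n - jj)
    · intro t ht
      simp only [Finset.mem_Icc] at *
      omega
    · intro jj hjj
      simp only [Finset.mem_Icc] at *
      omega
    · intro t ht
      simp only [Finset.mem_Icc] at ht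
      omega
    · intro jj hjj
      simp only [Finset.mem_Icc] at hjj
      omega
    · intro t ht
      simp only [Finset.mem_Icc] at ht
      have e1 : n - (n - t) = t := by omega
      have e2 : m - (n - t) = t - 1 - (n - (m + 1)) := by omega
      rw [e1, e2]
  · -- degenerate case m ≥ n
    have hn : n ≤ m := by omega
    have hL : ((-1 : k) ^ m) • (Matrix.of fun i j =>
        eval (fun p : Fin n × Fin n => A p.1 p.2) (pderiv (j, i) (sPoly k n (m + 1)))) = 0 := by
      have hz : sPoly k n (m + 1) = 0 := by rw [sPoly, if_neg hmn]
      ext i j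
      simp [hz]
    rw [show ((-1 : k) ^ m) • (Matrix.of fun i j =>
        eval (fun p : Fin n × Fin n => A p.1 p.2) (pderiv (j, i) (sPoly k n (m + 1)))) = 0
        from hL]
    symm
    have hsub : ∑ jj ∈ Finset.Icc 1 m,
        ((-1 : k) ^ jj * eval (fun p : Fin n × Fin n => A p.1 p.2) (sPoly k n jj)) •
          A ^ (m - jj) =
        ∑ jj ∈ Finset.Icc 1 n,
        ((-1 : k) ^ jj * eval (fun p : Fin n × Fin n => A p.1 p.2) (sPoly k n jj)) •
          A ^ (m - jj) := by
      symm
      apply Finset.sum_subset (Finset.Icc_subset_Icc_right hn)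
      intro x hx hx'
      simp only [Finset.mem_Icc] at hx hx'
      have hxn : ¬ x ≤ n := by omega
      rw [sPoly, if_neg hxn, map_zero, mul_zero, zero_smul]
    rw [hsub]
    have hsp : ∀ jj ∈ Finset.Icc 1 n,
        ((-1 : k) ^ jj * eval (fun p : Fin n × Fin n => A p.1 p.2) (sPoly k n jj)) •
          A ^ (m - jj) = (Matrix.charpoly A).coeff (n - jj) • A ^ (m - jj) := by
      intro jj hjj
      simp only [Finset.mem_Icc] at hjj
      rw [sPoly, if_pos hjj.2]
      have hC : ((-1 : MvPolynomial (Fin n × Fin n) k)) ^ jj =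
          MvPolynomial.C ((-1 : k) ^ jj) := by
        rw [map_pow, map_neg, map_one]
      rw [hC, map_mul, MvPolynomial.eval_C, E1]
      congr 1
      have h1 : ((-1 : k)) ^ jj * ((-1 : k)) ^ jj = 1 := by
        rw [← mul_pow]; norm_num
      rw [← mul_assoc, h1, one_mul]
    rw [Finset.sum_congr rfl hsp]
    have hcn : (Matrix.charpoly A).coeff n = 1 := by
      have h := (Matrix.charpoly_monic A).coeff_natDegree
      rw [hdeg] at h
      exact h
    have h0 : A ^ m = (Matrix.charpoly A).coeff (n - 0) • A ^ (m - 0) := by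
      rw [Nat.sub_zero, Nat.sub_zero, hcn, one_smul]
    rw [h0, ← Finset.sum_insert
      (f := fun x => (Matrix.charpoly A).coeff (n - x) • A ^ (m - x))
      (by simp : (0 : ℕ) ∉ Finset.Icc 1 n)]
    have hins : insert (0 : ℕ) (Finset.Icc 1 n) = Finset.Icc 0 n := by
      ext x
      simp only [Finset.mem_insert, Finset.mem_Icc]
      omega
    rw [hins]
    have hre : ∑ jj ∈ Finset.Icc 0 n, (Matrix.charpoly A).coeff (n - jj) • A ^ (m - jj) =
        ∑ t ∈ Finset.range (n + 1), (Matrix.charpoly A).coeff t • (A ^ (m - n) * A ^ t) := by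
      apply Finset.sum_nbij' (i := fun jj => n - jj) (j := fun t => n - t)
      · intro t ht
        simp only [Finset.mem_Icc, Finset.mem_range] at *
        omega
      · intro t ht
        simp only [Finset.mem_Icc, Finset.mem_range] at *
        omega
      · intro t ht
        simp only [Finset.mem_Icc] at ht
        omega
      · intro t ht
        simp only [Finset.mem_range] at ht
        omega
      · intro jj hjj
        simp only [Finset.mem_Icc] at hjj
        have e2 : m - jj = (m - n) + (n - jj) := by omega
        rw [e2, pow_add]
    rw [hre]
    have hfin : ∑ t ∈ Finset.range (n + 1),
        (Matrix.charpoly A).coeff t • (A ^ (m - n) * A ^ t) =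
        A ^ (m - n) * ∑ t ∈ Finset.range (n + 1), (Matrix.charpoly A).coeff t • A ^ t := by
      rw [Finset.mul_sum]
      apply Finset.sum_congr rfl
      intro t _
      rw [mul_smul_comm]
    rw [hfin]
    have h2 : ∑ t ∈ Finset.range (n + 1), (Matrix.charpoly A).coeff t • A ^ t =
        Polynomial.aeval A (Matrix.charpoly A) := by
      rw [Polynomial.aeval_eq_sum_range' (by omega : (Matrix.charpoly A).natDegree < n + 1)]
    rw [h2, Matrix.aeval_self_charpoly, mul_zero]
end

section
/- Let d̄ be the (n-1)×(n-1) minor of an n×(n-1) matrix B obtained by deleting the first row, and let V = {B ∈ Mat_{n,n-1} : d̄(B) ≠ 0}. Define ψ: V → gl_n by ψ(B) = [e_1|B]·N·[e_1|B]^{-1}, where [e_1|B] is the n×n matrix with first column e_1 and remaining columns those of B, and N is the n×n matrix that is 1 on the first subdiagonal and 0 elsewhere. Then ψ(B) is nilpotent and φ(ψ(B)) = B, where φ(A) = (A(e_1)|...|A^{n-1}(e_1)). Moreover, if A is nilpotent with d̄(φ(A)) ≠ 0 then ψ(φ(A)) = A. -/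
open Matrix

/-- `φ : A ↦ (A e₁ | A² e₁ | ⋯ | Aⁿ e₁)` from `(n+1) × (n+1)` matrices to `(n+1) × n`
matrices. -/
def phiMap {k : Type*} [Field k] (n : ℕ) (A : Matrix (Fin (n + 1)) (Fin (n + 1)) k) :
    Matrix (Fin (n + 1)) (Fin n) k :=
  Matrix.of fun i j => ((A ^ ((j : ℕ) + 1)) *ᵥ (Pi.single 0 1 : Fin (n + 1) → k)) i

/-- The minor `d̄(B)` of an `(n+1) × n` matrix `B`: the determinant of `B` with its first
row deleted. -/
def dbar {k : Type*} [Field k] (n : ℕ) (B : Matrix (Fin (n + 1)) (Fin n) k) : k :=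
  (Matrix.of fun (i j : Fin n) => B i.succ j).det

/-- The `(n+1) × (n+1)` matrix `[e₁|B]` with first column `e₁` and remaining columns those
of `B`. -/
def aug {k : Type*} [Field k] (n : ℕ) (B : Matrix (Fin (n + 1)) (Fin n) k) :
    Matrix (Fin (n + 1)) (Fin (n + 1)) k :=
  Matrix.of fun i j => Fin.cases ((Pi.single 0 1 : Fin (n + 1) → k) i) (fun j' => B i j') j

/-- The regular nilpotent Jordan matrix: `1` on the first subdiagonal, `0` elsewhere. -/
def regNilp (k : Type*) [Field k] (n : ℕ) : Matrix (Fin (n + 1)) (Fin (n + 1)) k :=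
  Matrix.of fun i j => if (i : ℕ) = (j : ℕ) + 1 then 1 else 0

/-- `ψ(B) = [e₁|B] · N · [e₁|B]⁻¹`. -/
noncomputable def psiMap {k : Type*} [Field k] (n : ℕ) (B : Matrix (Fin (n + 1)) (Fin n) k) :
    Matrix (Fin (n + 1)) (Fin (n + 1)) k :=
  aug n B * regNilp k n * (aug n B)⁻¹

section AuxPsiPhi
open Polynomial
variable {k : Type*} [Field k] {n : ℕ}

lemma det_aug (B : Matrix (Fin (n + 1)) (Fin n) k) : (aug n B).det = dbar n B := by
  rw [Matrix.det_succ_column_zero, Fintype.sum_eq_single (0 : Fin (n+1))]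
  · simp only [Fin.val_zero, pow_zero, one_mul, aug, Matrix.of_apply, Fin.cases_zero,
      Pi.single_eq_same, dbar]
    have hsub : (Matrix.of fun i j => Fin.cases ((Pi.single 0 1 : Fin (n+1) → k) i) (fun j' => B i j') j).submatrix
        (Fin.succAbove 0) (Fin.succ) = Matrix.of fun (i j : Fin n) => B i.succ j := by
      ext i j
      simp [Fin.succAbove_zero]
    rw [hsub]
  · intro i hi
    have : (aug n B) i 0 = 0 := by
      simp only [aug, Matrix.of_apply]
      rw [Fin.cases_zero]
      exact Pi.single_eq_of_ne hi 1
    rw [this]; ring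

lemma regNilp_pow_apply (m : ℕ) (i j : Fin (n+1)) :
    ((regNilp k n) ^ m) i j = if (i : ℕ) = (j : ℕ) + m then 1 else 0 := by
  induction m generalizing j with
  | zero => simp [Matrix.one_apply, Fin.ext_iff]
  | succ m ih =>
    rw [pow_succ, Matrix.mul_apply]
    by_cases h : (j : ℕ) + 1 ≤ n
    · rw [Finset.sum_eq_single (⟨(j : ℕ) + 1, Nat.lt_succ_of_le h⟩ : Fin (n+1))]
      · rw [ih]
        have he : (j : ℕ) + 1 + m = (j : ℕ) + (m + 1) := by omega
        simp [regNilp, he]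
      · intro l _ hl
        have hl' : ¬ ((l : ℕ) = (j : ℕ) + 1) := fun hc => hl (Fin.ext hc)
        simp [regNilp, hl']
      · simp
    · rw [Finset.sum_eq_zero, if_neg]
      · have := i.isLt; omega
      · intro l _
        have : ¬ ((l : ℕ) = (j : ℕ) + 1) := by have := l.isLt; have := j.isLt; omega
        simp [regNilp, this]

lemma regNilp_pow_card : (regNilp k n) ^ (n + 1) = 0 := by
  ext i j
  have hij : ¬((i : ℕ) = (j : ℕ) + (n + 1)) := by have := i.isLt; omega
  rw [regNilp_pow_apply, if_neg hij]
  rfl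

lemma conj_pow_mat (M N : Matrix (Fin (n+1)) (Fin (n+1)) k) (h1 : M⁻¹ * M = 1)
    (h2 : M * M⁻¹ = 1) (m : ℕ) : (M * N * M⁻¹) ^ m = M * N ^ m * M⁻¹ := by
  induction m with
  | zero => rw [pow_zero, pow_zero, Matrix.mul_one, h2]
  | succ m ih =>
    rw [pow_succ, ih, pow_succ]
    simp only [Matrix.mul_assoc]
    rw [← Matrix.mul_assoc M⁻¹ M, h1, Matrix.one_mul]

lemma aug_mulVec_e (B : Matrix (Fin (n + 1)) (Fin n) k) :
    aug n B *ᵥ (Pi.single 0 1 : Fin (n+1) → k) = Pi.single 0 1 := by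
  rw [Matrix.mulVec_single_one]
  ext i
  simp only [Matrix.col_apply, aug, Matrix.of_apply]
  rw [Fin.cases_zero]

lemma aug_apply_succ (B : Matrix (Fin (n + 1)) (Fin n) k) (i : Fin (n+1)) (j : Fin n) :
    aug n B i j.succ = B i j := by
  simp only [aug, Matrix.of_apply]
  rw [Fin.cases_succ]

lemma regNilp_pow_mulVec (m : ℕ) (hm : m ≤ n) :
    (regNilp k n) ^ m *ᵥ (Pi.single 0 1 : Fin (n+1) → k)
      = Pi.single (⟨m, Nat.lt_succ_of_le hm⟩ : Fin (n+1)) 1 := by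
  rw [Matrix.mulVec_single_one]
  ext i
  rw [Matrix.col_apply, regNilp_pow_apply]
  rw [Pi.single_apply]
  simp [Fin.ext_iff, eq_comm]

lemma pow_card_of_isNilpotent {A : Matrix (Fin (n+1)) (Fin (n+1)) k} (hA : IsNilpotent A) :
    A ^ (n + 1) = 0 := by
  have h := Matrix.isNilpotent_charpoly_sub_pow_of_isNilpotent hA
  have h0 : A.charpoly - X ^ (Fintype.card (Fin (n+1))) = 0 := h.eq_zero
  have hch : A.charpoly = X ^ (n + 1) := by
    rw [Fintype.card_fin] at h0
    exact sub_eq_zero.mp h0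
  have hc := A.aeval_self_charpoly
  rw [hch] at hc
  simpa using hc

lemma aug_phi_apply (A : Matrix (Fin (n+1)) (Fin (n+1)) k) (i j : Fin (n+1)) :
    aug n (phiMap n A) i j = ((A ^ (j : ℕ)) *ᵥ (Pi.single 0 1 : Fin (n+1) → k)) i := by
  induction j using Fin.cases with
  | zero =>
    simp only [aug, Matrix.of_apply, Fin.cases_zero, Fin.val_zero, pow_zero, Matrix.one_mulVec]
  | succ j' =>
    rw [aug_apply_succ]
    simp [phiMap]

lemma mul_aug_phi (A : Matrix (Fin (n+1)) (Fin (n+1)) k) (hA : A ^ (n+1) = 0) :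
    A * aug n (phiMap n A) = aug n (phiMap n A) * regNilp k n := by
  ext i j
  rw [Matrix.mul_apply, Matrix.mul_apply]
  have hL : ∑ l, A i l * aug n (phiMap n A) l j
      = ((A ^ ((j : ℕ) + 1)) *ᵥ (Pi.single 0 1 : Fin (n+1) → k)) i := by
    simp_rw [aug_phi_apply]
    rw [pow_succ', ← Matrix.mulVec_mulVec]
    simp [Matrix.mulVec, dotProduct]
  by_cases h : (j : ℕ) + 1 ≤ n
  · rw [hL, Finset.sum_eq_single (⟨(j : ℕ) + 1, Nat.lt_succ_of_le h⟩ : Fin (n+1))]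
    · rw [aug_phi_apply]
      simp [regNilp]
    · intro l _ hl
      have hl' : ¬((l : ℕ) = (j : ℕ) + 1) := fun hc => hl (Fin.ext hc)
      simp [regNilp, hl']
    · simp
  · have hj : (j : ℕ) = n := by have := j.isLt; omega
    rw [hL, Finset.sum_eq_zero]
    · rw [hj, hA]; simp
    · intro l _
      have hl' : ¬((l : ℕ) = (j : ℕ) + 1) := by have := l.isLt; omega
      simp [regNilp, hl']

end AuxPsiPhi

/-- For `B` with `d̄(B) ≠ 0`, `ψ(B)` is nilpotent and `φ(ψ(B)) = B`; and for nilpotent `A`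
with `d̄(φ(A)) ≠ 0`, `ψ(φ(A)) = A`. -/
theorem psiMap_phiMap {k : Type*} [Field k] (n : ℕ) (hn : 1 ≤ n) :
    (∀ B : Matrix (Fin (n + 1)) (Fin n) k, dbar n B ≠ 0 →
        IsNilpotent (psiMap n B) ∧ phiMap n (psiMap n B) = B) ∧
    (∀ A : Matrix (Fin (n + 1)) (Fin (n + 1)) k, IsNilpotent A → dbar n (phiMap n A) ≠ 0 →
        psiMap n (phiMap n A) = A) := by
  refine ⟨fun B hB => ?_, fun A hA hd => ?_⟩
  · have hu : IsUnit (aug n B).det := by rw [det_aug]; exact isUnit_iff_ne_zero.mpr hB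
    have h1 := Matrix.nonsing_inv_mul _ hu
    have h2 := Matrix.mul_nonsing_inv _ hu
    constructor
    · exact ⟨n + 1, by
        rw [psiMap, conj_pow_mat _ _ h1 h2, regNilp_pow_card, Matrix.mul_zero,
          Matrix.zero_mul]⟩
    · ext i j
      show ((psiMap n B) ^ ((j : ℕ) + 1) *ᵥ (Pi.single 0 1 : Fin (n+1) → k)) i = B i j
      have hMinv : (aug n B)⁻¹ *ᵥ (Pi.single 0 1 : Fin (n+1) → k) = Pi.single 0 1 := by
        conv_lhs => rw [← aug_mulVec_e B]
        rw [Matrix.mulVec_mulVec, h1, Matrix.one_mulVec]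
      rw [psiMap, conj_pow_mat _ _ h1 h2, ← Matrix.mulVec_mulVec, ← Matrix.mulVec_mulVec,
        hMinv, regNilp_pow_mulVec ((j : ℕ) + 1) (Nat.succ_le_of_lt j.isLt),
        Matrix.mulVec_single_one]
      have hjs : (⟨(j : ℕ) + 1, Nat.lt_succ_of_le (Nat.succ_le_of_lt j.isLt)⟩ : Fin (n+1))
          = Fin.succ j := rfl
      rw [Matrix.col_apply, hjs, aug_apply_succ]
  · have hA1 : A ^ (n + 1) = 0 := pow_card_of_isNilpotent hA
    have hu : IsUnit (aug n (phiMap n A)).det := by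
      rw [det_aug]; exact isUnit_iff_ne_zero.mpr hd
    rw [psiMap, ← mul_aug_phi A hA1, Matrix.mul_assoc, Matrix.mul_nonsing_inv _ hu,
      Matrix.mul_one]
end

section
/- Let μ be a partition of n with largest part μ_1, let C be the set of nilpotent n×n matrices all of whose Jordan blocks have size ≤ μ_1 (i.e., A^{μ_1} = 0), and let m = μ_1 - 1. Then the map φ_m: C → Mat_{n,m} given by A ↦ (A e_1 | A^2 e_1 | ... | A^m e_1) is dominant: its image contains the open set of n×m matrices which after deleting the first row still have rank m. -/
open Matrix

/-- Let `C = {A : A^μ₁ = 0}` (nilpotent matrices with all Jordan blocks of size `≤ μ₁`) and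
`m = μ₁ - 1`. The map `φ_m : C → Mat_{n+1, m}`, `A ↦ (A e₁ | ⋯ | A^m e₁)`, is dominant: its
image contains every matrix which after deleting the first row still has maximal rank `m`. -/
theorem phi_m_dominant {k : Type*} [Field k] [IsAlgClosed k] (n : ℕ) (hn : 1 ≤ n)
    (μ₁ : ℕ) (hμ : 1 ≤ μ₁) (B : Matrix (Fin (n + 1)) (Fin (μ₁ - 1)) k)
    (hB : (Matrix.of fun (i : Fin n) (j : Fin (μ₁ - 1)) => B i.succ j).rank = μ₁ - 1) :
    ∃ A : Matrix (Fin (n + 1)) (Fin (n + 1)) k, A ^ μ₁ = 0 ∧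
      (Matrix.of fun (i : Fin (n + 1)) (j : Fin (μ₁ - 1)) =>
        ((A ^ ((j : ℕ) + 1)) *ᵥ (Pi.single 0 1 : Fin (n + 1) → k)) i) = B := by
  obtain ⟨m, rfl⟩ : ∃ m, μ₁ = m + 1 := ⟨μ₁ - 1, (Nat.succ_pred_eq_of_pos hμ).symm⟩
  -- columns of the truncated matrix are linearly independent
  have hcols : LinearIndependent k (fun (j : Fin (m + 1 - 1)) (i : Fin n) => B i.succ j) := by
    rw [linearIndependent_iff_card_eq_finrank_span]
    have : (Set.range fun (j : Fin (m + 1 - 1)) (i : Fin n) => B i.succ j) =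
        Set.range (Matrix.of fun (i : Fin n) (j : Fin (m + 1 - 1)) => B i.succ j).col := rfl
    rw [this, Set.finrank, ← Matrix.rank_eq_finrank_span_cols, hB]
    simp
  -- hence the columns of `B` itself are independent
  have hc : LinearIndependent k (fun (j : Fin (m + 1 - 1)) (i : Fin (n + 1)) => B i j) := by
    refine LinearIndependent.of_comp (LinearMap.funLeft k k Fin.succ) ?_
    exact hcols
  -- the first basis vector together with the columns of `B`
  set w : Fin (m + 1) → (Fin (n + 1) → k) :=
    Fin.cons (Pi.single 0 1) (fun (j : Fin (m + 1 - 1)) (i : Fin (n + 1)) => B i j) with hwdef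
  have hw : LinearIndependent k w := by
    rw [hwdef, linearIndependent_fin_cons]
    refine ⟨hc, ?_⟩
    intro hmem
    rw [Submodule.mem_span_range_iff_exists_fun] at hmem
    obtain ⟨c, hcsum⟩ := hmem
    have h2 : ∑ j, c j • (fun (i : Fin n) => B i.succ j) = 0 := by
      have h3 := congrArg (LinearMap.funLeft k k (Fin.succ : Fin n → Fin (n + 1))) hcsum
      rw [map_sum] at h3
      simp only [_root_.map_smul] at h3
      have h4 : (LinearMap.funLeft k k (Fin.succ : Fin n → Fin (n + 1)))
          (Pi.single (0 : Fin (n + 1)) (1 : k)) = 0 := by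
        ext i
        simp [LinearMap.funLeft_apply, Pi.single_apply, (Fin.succ_ne_zero i)]
      rw [h4] at h3
      exact h3
    have hc0 : ∀ j, c j = 0 := by
      have := Fintype.linearIndependent_iff.mp hcols c h2
      exact this
    have : (Pi.single 0 1 : Fin (n+1) → k) = 0 := by
      rw [← hcsum]; simp [hc0]
    have := congrFun this 0
    simp at this
  -- a left inverse `T` of the linear combination map
  obtain ⟨T, hT⟩ := LinearMap.exists_leftInverse_of_injective
    (Finsupp.linearCombination k w) (LinearMap.ker_eq_bot.mpr hw)
  have hTw : ∀ j, T (w j) = Finsupp.single j 1 := by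
    intro j
    have : w j = Finsupp.linearCombination k w (Finsupp.single j 1) := by
      simp [Finsupp.linearCombination_single]
    rw [this, ← LinearMap.comp_apply, hT, LinearMap.id_apply]
  -- the shifted family
  set u : Fin (m + 1) → (Fin (n + 1) → k) :=
    fun j => if h : (j : ℕ) < m then w ⟨(j : ℕ) + 1, by omega⟩ else 0 with hudef
  set A : (Fin (n + 1) → k) →ₗ[k] (Fin (n + 1) → k) :=
    (Finsupp.linearCombination k u) ∘ₗ T with hAdef
  have hAw : ∀ j, A (w j) = u j := by
    intro j
    rw [hAdef, LinearMap.comp_apply, hTw, Finsupp.linearCombination_single, one_smul]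
  have hpow : ∀ (p : ℕ) (j : Fin (m + 1)), (A ^ p) (w j) =
      if h : (j : ℕ) + p ≤ m then w ⟨(j : ℕ) + p, by omega⟩ else 0 := by
    intro p
    induction p with
    | zero =>
      intro j
      rw [dif_pos (by omega : (j : ℕ) + 0 ≤ m)]
      simp
    | succ p ih =>
      intro j
      have : (A ^ (p + 1)) (w j) = (A ^ p) (A (w j)) := by
        rw [pow_succ]; rfl
      rw [this, hAw]
      by_cases h : (j : ℕ) < m
      · rw [hudef]
        simp only [dif_pos h]
        rw [ih ⟨(j : ℕ) + 1, by omega⟩]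
        by_cases h2 : (j : ℕ) + (p + 1) ≤ m
        · rw [dif_pos (show ((⟨(j : ℕ) + 1, by omega⟩ : Fin (m + 1)) : ℕ) + p ≤ m by
              simp only [Fin.val_mk]; omega), dif_pos h2]
          exact congrArg w (by
            ext
            simp only [Fin.val_mk]
            omega)
        · rw [dif_neg (show ¬((⟨(j : ℕ) + 1, by omega⟩ : Fin (m + 1)) : ℕ) + p ≤ m by
              simp only [Fin.val_mk]; omega), dif_neg h2]
      · rw [hudef]
        simp only [dif_neg h]
        rw [map_zero, dif_neg (by omega)]
  have hum : ∀ j, (A ^ m) (u j) = 0 := by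
    intro j
    by_cases h : (j : ℕ) < m
    · rw [hudef]
      simp only [dif_pos h]
      rw [hpow m ⟨(j : ℕ) + 1, by omega⟩, dif_neg (show ¬((⟨(j : ℕ) + 1, by omega⟩ : Fin (m + 1)) : ℕ) + m ≤ m by
        simp only [Fin.val_mk]; omega)]
    · rw [hudef]; simp only [dif_neg h, map_zero]
  have hnil : A ^ (m + 1) = 0 := by
    refine LinearMap.ext fun x => ?_
    have h1 : (A ^ (m + 1)) x = (A ^ m) (A x) := by rw [pow_succ]; rfl
    have h2 : A x = (Finsupp.linearCombination k u) (T x) := rfl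
    rw [LinearMap.zero_apply, h1, h2, Finsupp.linearCombination_apply, Finsupp.sum, map_sum]
    refine Finset.sum_eq_zero fun j _ => ?_
    rw [_root_.map_smul, hum, smul_zero]
  refine ⟨LinearMap.toMatrixAlgEquiv' A, ?_, ?_⟩
  · rw [← map_pow, hnil, map_zero]
  · ext i j
    have hv : ((LinearMap.toMatrixAlgEquiv' A) ^ ((j : ℕ) + 1)) *ᵥ (Pi.single 0 1) =
        (A ^ ((j : ℕ) + 1)) (Pi.single 0 1) := by
      rw [← map_pow, ← Matrix.toLinAlgEquiv'_apply]
      rw [show Matrix.toLinAlgEquiv' (LinearMap.toMatrixAlgEquiv' (A ^ ((j:ℕ)+1))) = A ^ ((j:ℕ)+1)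
        from LinearMap.toMatrixAlgEquiv'.symm_apply_apply _]
    have hsingle : (Pi.single 0 1 : Fin (n + 1) → k) = w 0 := by
      rw [hwdef]; simp
    rw [Matrix.of_apply, hv, hsingle, hpow, dif_pos (show ((0 : Fin (m+1)) : ℕ) + ((j : ℕ) + 1) ≤ m by have hj := j.isLt; simp only [Fin.val_zero]; omega)]
    have : (⟨((0 : Fin (m+1)) : ℕ) + ((j : ℕ) + 1), by have hj := j.isLt; simp only [Fin.val_zero]; omega⟩ : Fin (m + 1)) =
        Fin.succ ⟨(j : ℕ), by have hj := j.isLt; omega⟩ := by ext; simp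
    rw [this, hwdef, Fin.cons_succ]
    exact congrArg (B i) (Fin.eta j j.isLt)
end

section
/- Let N be the regular nilpotent n×n Jordan matrix (1's on the first subdiagonal, 0 elsewhere), n ≥ 3, and let N_sr be N with the entry in position (n, n-1) set to 0. Then there is a family S_t ∈ GL_n, defined for t ≠ 0, such that lim_{t→0} S_t^{-1} N S_t = N_sr; in particular N_sr lies in the closure of the conjugacy orbit through the matrices S_t^{-1} N S_t. -/
open Matrix

/-- Let `N` be the regular nilpotent `n × n` Jordan matrix (`n ≥ 3`) and `N_sr` the matrix
obtained from `N` by setting the `(n, n-1)` entry to `0` (indices `1`-based; here `0`-based: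
entry `(n-1, n-2)`). Then there is a family `S_t ∈ GL_n`, `t ≠ 0`, such that the entries of
`S_t⁻¹ N S_t` are polynomials in `t` whose value at `t = 0` is `N_sr`; in particular
`N_sr = lim_{t→0} S_t⁻¹ N S_t` lies in the closure of the orbit through the `S_t⁻¹ N S_t`. -/
theorem subregular_in_orbit_closure {k : Type*} [Field k] [IsAlgClosed k] (n : ℕ)
    (hn : 3 ≤ n) (N Nsr : Matrix (Fin n) (Fin n) k)
    (hN : N = Matrix.of fun (i j : Fin n) => if (i : ℕ) = (j : ℕ) + 1 then 1 else 0)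
    (hNsr : Nsr = Matrix.of fun (i j : Fin n) =>
      if (i : ℕ) = n - 1 ∧ (j : ℕ) = n - 2 then 0 else N i j) :
    ∃ S : k → Matrix (Fin n) (Fin n) k, ∃ P : Matrix (Fin n) (Fin n) (Polynomial k),
      (∀ t : k, t ≠ 0 → IsUnit (S t)) ∧
      (∀ t : k, t ≠ 0 → (S t)⁻¹ * N * S t = Matrix.of fun i j => (P i j).eval t) ∧
      (Matrix.of fun i j => (P i j).eval 0) = Nsr := by
  classical
  refine ⟨fun t => Matrix.diagonal (fun i => if (i : ℕ) = n - 1 then t⁻¹ else 1),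
    Matrix.of (fun i j => if (i : ℕ) = n - 1 ∧ (j : ℕ) = n - 2 then Polynomial.X
      else Polynomial.C (if (i : ℕ) = (j : ℕ) + 1 then (1 : k) else 0)), ?_, ?_, ?_⟩
  · intro t ht
    rw [Matrix.isUnit_iff_isUnit_det, Matrix.det_diagonal, isUnit_iff_ne_zero,
      Finset.prod_ne_zero_iff]
    intro i _
    split_ifs with h
    · exact inv_ne_zero ht
    · exact one_ne_zero
  · intro t ht
    have hinv : (Matrix.diagonal (fun i : Fin n => if (i : ℕ) = n - 1 then t⁻¹ else 1))⁻¹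
        = Matrix.diagonal (fun i : Fin n => if (i : ℕ) = n - 1 then t else 1) := by
      apply Matrix.inv_eq_left_inv
      have hfun : (fun i : Fin n => (if (i : ℕ) = n - 1 then t else 1) *
          (if (i : ℕ) = n - 1 then t⁻¹ else 1)) = fun _ => (1 : k) := by
        funext i
        split_ifs with h
        · field_simp
        · simp
      rw [Matrix.diagonal_mul_diagonal, hfun, Matrix.diagonal_one]
    rw [hinv]
    ext i j
    simp only [Matrix.mul_diagonal, Matrix.diagonal_mul, Matrix.of_apply, hN]
    -- goal: (if i=n-1 then t else 1) * ((if i=j+1 then 1 else 0) * (if j=n-1 then t⁻¹ else 1))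
    --        = eval t (P i j)
    have hi := i.isLt
    have hj := j.isLt
    by_cases h1 : (i : ℕ) = n - 1 ∧ (j : ℕ) = n - 2
    · have : (i : ℕ) = (j : ℕ) + 1 := by omega
      have hj' : ¬ ((j : ℕ) = n - 1) := by omega
      have e1 : ¬ (n - 2 = n - 1) := by omega
      have e2 : n = n - 2 + 2 := by omega
      have e2' : n - 2 + 2 = n := by omega
      simp [h1, this, hj', e1, e2', ht]
    · simp only [h1, if_false, Polynomial.eval_C]
      by_cases h2 : (i : ℕ) = (j : ℕ) + 1
      · -- then not (i = n-1), since that would force j = n-2; and j ≠ n-1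
        have hi' : ¬ ((i : ℕ) = n - 1) := by omega
        have hj' : ¬ ((j : ℕ) = n - 1) := by omega
        have hne : ¬ ((j : ℕ) + 1 = n - 1) := by omega
        simp [h2, hi', hj', hne]
      · simp [h2]
  · ext i j
    rw [hNsr, hN]
    simp only [Matrix.of_apply]
    split_ifs with h <;> simp
end

section
/- Let λ be a partition of r with at most n-1 parts. Then the number of semi-standard rational tableaux of shape ((r), λ) with entries in {1,...,n} and weight zero equals the number of semi-standard Young tableaux of shape λ with entries in {1,...,n-1}. Here a rational tableau (S,T) of shape ((r),λ) is semi-standard iff S and T are semi-standard, and for each i the number of entries ≤ i in the first column of S plus the number of entries ≤ i in the first column of T is at most i; weight zero means S and T have the same content. -/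
open Finset

private lemma count_ofFn' {r : ℕ} (f : Fin r → ℕ) (v : ℕ) :
    (List.ofFn f).count v = (Finset.univ.filter fun a => f a = v).card := by
  induction r with
  | zero => simp
  | succ m ih =>
    rw [List.ofFn_succ, List.count_cons, ih (fun i => f i.succ)]
    rw [Finset.card_filter, Finset.card_filter, Fin.sum_univ_succ]
    simp only [beq_iff_eq]
    omega

private lemma monotone_eq_of_count' {r n : ℕ} {f g : Fin r → Fin n} (hf : Monotone f)
    (hg : Monotone g)
    (h : ∀ v : ℕ, (Finset.univ.filter fun a => (f a : ℕ) = v).card =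
      (Finset.univ.filter fun a => (g a : ℕ) = v).card) : f = g := by
  have hf' : Monotone fun a => (f a : ℕ) := fun a b hab => hf hab
  have hg' : Monotone fun a => (g a : ℕ) := fun a b hab => hg hab
  have hperm : (List.ofFn fun a => (f a : ℕ)).Perm (List.ofFn fun a => (g a : ℕ)) := by
    rw [List.perm_iff_count]
    intro v
    rw [count_ofFn', count_ofFn', h]
  have heq := List.Perm.eq_of_pairwise' (List.sortedLE_ofFn_iff.mpr hf').pairwise (List.sortedLE_ofFn_iff.mpr hg').pairwise hperm
  rw [List.ofFn_inj] at heq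
  funext a
  exact Fin.ext (congrFun heq a)

private lemma filter_get_card' {l : List ℕ} {r : ℕ} (h : l.length = r) (v : ℕ) :
    (Finset.univ.filter fun a : Fin r => l.get (Fin.cast h.symm a) = v).card = l.count v := by
  subst h
  conv_rhs => rw [← List.ofFn_get l, count_ofFn']
  congr 1

/-- Add one to every entry of a semistandard Young tableau. -/
private def addOne (μ : YoungDiagram) (T : SemistandardYoungTableau μ) :
    SemistandardYoungTableau μ where
  entry i j := if (i, j) ∈ μ then T i j + 1 else 0
  row_weak' := by
    intro i j1 j2 hj hc
    show (if (i, j1) ∈ μ then T i j1 + 1 else 0) ≤ (if (i, j2) ∈ μ then T i j2 + 1 else 0)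
    rw [if_pos hc, if_pos (μ.up_left_mem le_rfl hj.le hc)]
    exact Nat.add_le_add_right (T.row_weak hj hc) 1
  col_strict' := by
    intro i1 i2 j hi hc
    show (if (i1, j) ∈ μ then T i1 j + 1 else 0) < (if (i2, j) ∈ μ then T i2 j + 1 else 0)
    rw [if_pos hc, if_pos (μ.up_left_mem hi.le le_rfl hc)]
    exact Nat.add_lt_add_right (T.col_strict hi hc) 1
  zeros' h := if_neg h

private lemma addOne_apply (μ : YoungDiagram) (T : SemistandardYoungTableau μ) (i j : ℕ) :
    addOne μ T i j = if (i, j) ∈ μ then T i j + 1 else 0 := rfl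

/-- Subtract one from every entry of a semistandard Young tableau with positive entries. -/
private def subOne (μ : YoungDiagram) (T : SemistandardYoungTableau μ)
    (hpos : ∀ i j, (i, j) ∈ μ → 1 ≤ T i j) : SemistandardYoungTableau μ where
  entry i j := T i j - 1
  row_weak' hj hc := Nat.sub_le_sub_right (T.row_weak hj hc) 1
  col_strict' := by
    intro i1 i2 j hi hc
    show T i1 j - 1 < T i2 j - 1
    have h1 := hpos _ _ (μ.up_left_mem hi.le le_rfl hc)
    have h2 := T.col_strict hi hc
    omega
  zeros' := by
    intro i j h
    show T i j - 1 = 0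
    rw [T.zeros h]

private lemma subOne_apply (μ : YoungDiagram) (T : SemistandardYoungTableau μ)
    (hpos : ∀ i j, (i, j) ∈ μ → 1 ≤ T i j) (i j : ℕ) :
    subOne μ T hpos i j = T i j - 1 := rfl

private lemma col_bound' (μ : YoungDiagram) (T : SemistandardYoungTableau μ)
    (hpos : ∀ i j, (i, j) ∈ μ → 1 ≤ T i j) :
    ∀ a, a < μ.colLen 0 → a + 1 ≤ T a 0 := by
  intro a
  induction a with
  | zero => exact fun h => hpos 0 0 (YoungDiagram.mem_iff_lt_colLen.mpr h)
  | succ b ih =>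
    intro h
    have hm : ((b + 1 : ℕ), 0) ∈ μ := YoungDiagram.mem_iff_lt_colLen.mpr h
    have h1 : T b 0 < T (b + 1) 0 := T.col_strict (by omega) hm
    have h2 := ih (lt_trans (Nat.lt_succ_self b) h)
    omega

private lemma mkS_len (r : ℕ) (μ : YoungDiagram) (hcard : μ.card = r)
    (T : SemistandardYoungTableau μ) :
    (Multiset.sort (μ.cells.val.map fun c => T c.1 c.2) (·≤·)).length = r := by
  rw [Multiset.length_sort, Multiset.card_map]
  exact hcard

/-- The monotone single-row tableau with the same content as `T`. -/
private def mkS (n r : ℕ) (μ : YoungDiagram) (hcard : μ.card = r)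
    (T : SemistandardYoungTableau μ) (hb : ∀ i j, (i, j) ∈ μ → T i j < n) : Fin r → Fin n :=
  fun a =>
    ⟨(Multiset.sort (μ.cells.val.map fun c => T c.1 c.2) (·≤·)).get
        (Fin.cast (mkS_len r μ hcard T).symm a), by
      have hmem : (Multiset.sort (μ.cells.val.map fun c => T c.1 c.2) (·≤·)).get
          (Fin.cast (mkS_len r μ hcard T).symm a) ∈
          (Multiset.sort (μ.cells.val.map fun c => T c.1 c.2) (·≤·)) := by exact List.get_mem _ _
      rw [Multiset.mem_sort] at hmem
      obtain ⟨c, hc, hce⟩ := Multiset.mem_map.mp hmem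
      rw [← hce]
      exact hb c.1 c.2 ((YoungDiagram.mem_cells c).mp (Finset.mem_val.mp hc))⟩

private lemma mkS_monotone (n r : ℕ) (μ : YoungDiagram) (hcard : μ.card = r)
    (T : SemistandardYoungTableau μ) (hb : ∀ i j, (i, j) ∈ μ → T i j < n) :
    Monotone (mkS n r μ hcard T hb) := by
  intro a b hab
  have hs : (Multiset.sort (μ.cells.val.map fun c => T c.1 c.2) (·≤·)).Pairwise (·≤·) :=
    Multiset.pairwise_sort _ _
  have h2 : (Fin.cast (mkS_len r μ hcard T).symm a) ≤ (Fin.cast (mkS_len r μ hcard T).symm b) :=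
    hab
  exact hs.rel_get_of_le h2

private lemma mkS_count (n r : ℕ) (μ : YoungDiagram) (hcard : μ.card = r)
    (T : SemistandardYoungTableau μ) (hb : ∀ i j, (i, j) ∈ μ → T i j < n) (v : ℕ) :
    (Finset.univ.filter fun a : Fin r => (mkS n r μ hcard T hb a : ℕ) = v).card =
      (μ.cells.filter fun c => T c.1 c.2 = v).card := by
  have h1 := filter_get_card' (l := Multiset.sort (μ.cells.val.map fun c => T c.1 c.2) (·≤·))
    (mkS_len r μ hcard T) v
  refine h1.trans ?_
  rw [← Multiset.coe_count, Multiset.sort_eq, Multiset.count_map]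
  have h2 : (μ.cells.filter fun c => T c.1 c.2 = v).card
      = Multiset.card (Multiset.filter (fun c => T c.1 c.2 = v) μ.cells.val) := rfl
  rw [h2]
  congr 1
  exact Multiset.filter_congr fun x _ => eq_comm



/-- Let `λ` (here the Young diagram `μ`) be a partition of `r` with at most `n-1` parts.
The number of semistandard rational tableaux `(S, T)` of shape `((r), λ)` with entries in
`{1, …, n}` (here `0`-based: values `< n`) and weight zero equals the number of
semistandard Young tableaux of shape `λ` with entries in `{1, …, n-1}` (values `< n-1`).
Here `S` is a single-row tableau of length `r`, i.e. a monotone map `Fin r → Fin n`,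
`T` is a semistandard tableau of shape `μ` with values `< n`; the semistandardness
condition for the rational tableau is that for each `i ∈ {1, …, n}` the number of entries
`≤ i` in the first column of `S` (which consists of `S 0` alone, when `r > 0`) plus the
number of entries `≤ i` in the first column of `T` is at most `i` (an entry with `0`-based
value `v` is `≤ i` iff `v < i`); weight zero means `S` and `T` have the same content. -/
theorem card_rational_tableaux (n r : ℕ) (hn : 1 ≤ n) (μ : YoungDiagram)
    (hcard : μ.card = r) (hlen : ∀ i, n - 1 ≤ i → μ.rowLen i = 0) :
    Nat.card {ST : (Fin r → Fin n) × SemistandardYoungTableau μ //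
        Monotone ST.1 ∧
        (∀ i j, (i, j) ∈ μ → ST.2 i j < n) ∧
        (∀ i : ℕ, 1 ≤ i → i ≤ n →
          ((Finset.univ.filter fun a : Fin r => (a : ℕ) = 0 ∧ (ST.1 a : ℕ) < i).card +
            ((Finset.range (μ.colLen 0)).filter fun a => ST.2 a 0 < i).card ≤ i)) ∧
        (∀ v : ℕ, (Finset.univ.filter fun a : Fin r => (ST.1 a : ℕ) = v).card =
          (μ.cells.filter fun c => ST.2 c.1 c.2 = v).card)} =
      Nat.card {T : SemistandardYoungTableau μ // ∀ i j, (i, j) ∈ μ → T i j < n - 1} := by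
  have key : ∀ (ST : (Fin r → Fin n) × SemistandardYoungTableau μ),
      Monotone ST.1 →
      (∀ i : ℕ, 1 ≤ i → i ≤ n →
        ((Finset.univ.filter fun a : Fin r => (a : ℕ) = 0 ∧ (ST.1 a : ℕ) < i).card +
          ((Finset.range (μ.colLen 0)).filter fun a => ST.2 a 0 < i).card ≤ i)) →
      (∀ v : ℕ, (Finset.univ.filter fun a : Fin r => (ST.1 a : ℕ) = v).card =
        (μ.cells.filter fun c => ST.2 c.1 c.2 = v).card) →
      ∀ i j, (i, j) ∈ μ → 1 ≤ ST.2 i j := by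
    rintro ⟨S, T⟩ hmono hcol hwt i j hc
    dsimp only at hmono hcol hwt ⊢
    by_contra hlt
    push_neg at hlt
    have hTij : T i j = 0 := Nat.lt_one_iff.mp hlt
    have hc0 : (i, 0) ∈ μ := μ.up_left_mem le_rfl (Nat.zero_le j) hc
    have hTi0 : T i 0 = 0 := by
      have := T.row_weak_of_le (Nat.zero_le j) hc
      omega
    have hT00 : T 0 0 = 0 := by
      rcases Nat.eq_zero_or_pos i with h0 | h0
      · rw [← h0] at hTi0 ⊢; exact hTi0
      · have := T.col_strict h0 hc0; omega
    have hc00 : ((0 : ℕ), (0 : ℕ)) ∈ μ := μ.up_left_mem (Nat.zero_le i) le_rfl hc0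
    have hTcount : 1 ≤ ((Finset.range (μ.colLen 0)).filter fun a => T a 0 < 1).card := by
      refine Finset.card_pos.mpr ⟨0, ?_⟩
      simp only [Finset.mem_filter, Finset.mem_range, hT00]
      exact ⟨YoungDiagram.mem_iff_lt_colLen.mp hc00, Nat.zero_lt_one⟩
    have hScount : 0 < (Finset.univ.filter fun a : Fin r => (S a : ℕ) = 0).card := by
      rw [hwt 0]
      refine Finset.card_pos.mpr ⟨(i, j), ?_⟩
      simp only [Finset.mem_filter, YoungDiagram.mem_cells]
      exact ⟨hc, hTij⟩
    obtain ⟨a, ha⟩ := Finset.card_pos.mp hScount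
    rw [Finset.mem_filter] at ha
    have hr : 0 < r := lt_of_le_of_lt (Nat.zero_le _) a.2
    have hS0 : (S ⟨0, hr⟩ : ℕ) = 0 := by
      have hle : S ⟨0, hr⟩ ≤ S a := hmono (Fin.mk_le_of_le_val (Nat.zero_le _))
      have : (S ⟨0, hr⟩ : ℕ) ≤ (S a : ℕ) := hle
      omega
    have hScount1 : 1 ≤ (Finset.univ.filter fun b : Fin r => (b : ℕ) = 0 ∧ (S b : ℕ) < 1).card := by
      refine Finset.card_pos.mpr ⟨⟨0, hr⟩, ?_⟩
      refine Finset.mem_filter.mpr ⟨Finset.mem_univ _, rfl, ?_⟩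
      omega
    have hfin := hcol 1 le_rfl hn
    omega
  refine Nat.card_eq_of_bijective
    (fun x => ⟨subOne μ x.1.2 (key x.1 x.2.1 x.2.2.2.1 x.2.2.2.2), fun i j hc => by
      have h1 := key x.1 x.2.1 x.2.2.2.1 x.2.2.2.2 i j hc
      have h2 := x.2.2.1 i j hc
      rw [subOne_apply]
      omega⟩) ⟨?_, ?_⟩
  · rintro ⟨⟨S₁, T₁⟩, h₁⟩ ⟨⟨S₂, T₂⟩, h₂⟩ heq
    have hpos₁ : ∀ i j, (i, j) ∈ μ → 1 ≤ T₁ i j := key (S₁, T₁) h₁.1 h₁.2.2.1 h₁.2.2.2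
    have hpos₂ : ∀ i j, (i, j) ∈ μ → 1 ≤ T₂ i j := key (S₂, T₂) h₂.1 h₂.2.2.1 h₂.2.2.2
    have heq' : subOne μ T₁ hpos₁ = subOne μ T₂ hpos₂ := congrArg Subtype.val heq
    have hT : T₁ = T₂ := by
      ext i j
      by_cases hc : (i, j) ∈ μ
      · have he : T₁ i j - 1 = T₂ i j - 1 := by
          have h3 := congrFun (congrFun
            (congrArg (fun T : SemistandardYoungTableau μ => (T : ℕ → ℕ → ℕ)) heq') i) j
          simpa [subOne_apply] using h3
        have hp1 := hpos₁ i j hc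
        have hp2 := hpos₂ i j hc
        omega
      · rw [T₁.zeros hc, T₂.zeros hc]
    subst hT
    have hS : S₁ = S₂ := monotone_eq_of_count' h₁.1 h₂.1
      (fun v => (h₁.2.2.2 v).trans (h₂.2.2.2 v).symm)
    subst hS
    exact Subtype.ext rfl
  · rintro ⟨T', hT'⟩
    have hb : ∀ i j, (i, j) ∈ μ → addOne μ T' i j < n := by
      intro i j hc
      rw [addOne_apply, if_pos hc]
      have := hT' i j hc
      omega
    have hpos : ∀ i j, (i, j) ∈ μ → 1 ≤ addOne μ T' i j := by
      intro i j hc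
      rw [addOne_apply, if_pos hc]
      omega
    refine ⟨⟨(mkS n r μ hcard (addOne μ T') hb, addOne μ T'),
      mkS_monotone n r μ hcard (addOne μ T') hb, hb, ?_,
      fun v => mkS_count n r μ hcard (addOne μ T') hb v⟩, ?_⟩
    · intro i hi1 hin
      dsimp only
      have hS1 : (Finset.univ.filter fun a : Fin r =>
          (a : ℕ) = 0 ∧ (mkS n r μ hcard (addOne μ T') hb a : ℕ) < i).card ≤ 1 := by
        refine Finset.card_le_one.mpr ?_
        intro a ha b hbm
        simp only [Finset.mem_filter] at ha hbm
        exact Fin.ext (ha.2.1.trans hbm.2.1.symm)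
      have hT1 : ((Finset.range (μ.colLen 0)).filter fun a => addOne μ T' a 0 < i).card
          ≤ i - 1 := by
        have hsub : ((Finset.range (μ.colLen 0)).filter fun a => addOne μ T' a 0 < i) ⊆
            Finset.range (i - 1) := by
          intro a ha
          simp only [Finset.mem_filter, Finset.mem_range] at ha ⊢
          have := col_bound' μ (addOne μ T') hpos a ha.1
          omega
        calc ((Finset.range (μ.colLen 0)).filter fun a => addOne μ T' a 0 < i).card
            ≤ (Finset.range (i - 1)).card := Finset.card_le_card hsub
          _ = i - 1 := Finset.card_range _
      omega
    · apply Subtype.ext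
      refine SemistandardYoungTableau.ext fun i j => ?_
      show (if (i, j) ∈ μ then T' i j + 1 else 0) - 1 = T' i j
      by_cases hc : (i, j) ∈ μ
      · rw [if_pos hc, Nat.add_sub_cancel]
      · rw [if_neg hc, T'.zeros hc]
end
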